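/- Let a < b < c be real numbers and let h : ℝ → ℝ be Lipschitz on [a, c]. Suppose h is convex on [a, b] and convex on [b, c], that h has a left derivative d⁻ at b (derivative at b within [a, b]) and a right derivative d⁺ at b (derivative at b within [b, c]), and that d⁻ ≤ d⁺. Then h is convex on [a, c]. -/

import Mathlib

lemma glue_slope_le_left {a b : ℝ} (hab : a < b) {h : ℝ → ℝ}
    (hconv : ConvexOn ℝ (Set.Icc a b) h) {d : ℝ}
    (hd : HasDerivWithinAt h d (Set.Icc a b) b) {x : ℝ}
    (hx : x ∈ Set.Icc a b) (hxb : x < b) : (h b - h x) / (b - x) ≤ d := by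
  rw [hasDerivWithinAt_iff_tendsto_slope, Set.Icc_sdiff_right] at hd
  have hne : (nhdsWithin b (Set.Ico a b)).NeBot := by
    apply mem_closure_iff_nhdsWithin_neBot.mp
    rw [closure_Ico hab.ne]
    exact Set.right_mem_Icc.2 hab.le
  refine ge_of_tendsto hd ?_
  filter_upwards [self_mem_nhdsWithin,
    mem_nhdsWithin_of_mem_nhds (Ioi_mem_nhds hxb)] with t ht hxt
  have h1 : (h x - h b) / (x - b) ≤ (h t - h b) / (t - b) :=
    hconv.secant_mono (Set.right_mem_Icc.2 hab.le) hx
      (Set.mem_Icc.2 ⟨ht.1, ht.2.le⟩) hxb.ne ht.2.ne (le_of_lt hxt)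
  have h2 : (h b - h x) / (b - x) = (h x - h b) / (x - b) := by
    rw [← neg_div_neg_eq]; ring_nf
  rw [slope_def_field, h2]
  exact h1

lemma glue_slope_ge_right {b c : ℝ} (hbc : b < c) {h : ℝ → ℝ}
    (hconv : ConvexOn ℝ (Set.Icc b c) h) {d : ℝ}
    (hd : HasDerivWithinAt h d (Set.Icc b c) b) {z : ℝ}
    (hz : z ∈ Set.Icc b c) (hbz : b < z) : d ≤ (h z - h b) / (z - b) := by
  rw [hasDerivWithinAt_iff_tendsto_slope, Set.Icc_diff_left] at hd
  have hne : (nhdsWithin b (Set.Ioc b c)).NeBot := by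
    apply mem_closure_iff_nhdsWithin_neBot.mp
    rw [closure_Ioc hbc.ne]
    exact Set.left_mem_Icc.2 hbc.le
  refine le_of_tendsto hd ?_
  filter_upwards [self_mem_nhdsWithin,
    mem_nhdsWithin_of_mem_nhds (Iio_mem_nhds hbz)] with t ht htz
  have h1 : (h t - h b) / (t - b) ≤ (h z - h b) / (z - b) :=
    hconv.secant_mono (Set.left_mem_Icc.2 hbc.le)
      (Set.mem_Icc.2 ⟨ht.1.le, ht.2⟩) hz ht.1.ne' hbz.ne' (le_of_lt htz)
  rw [slope_def_field]
  exact h1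

/-- **Lemma (gluing convex functions at a junction point).**
Let `h : ℝ → ℝ` be Lipschitz on `[a, c]`, convex on `[a, b]` and on `[b, c]`.
If the left derivative `d⁻` of `h` at `b` (within `[a, b]`) is at most the right
derivative `d⁺` of `h` at `b` (within `[b, c]`), then `h` is convex on `[a, c]`. -/
theorem convexOn_of_convexOn_glue
    {a b c : ℝ} (hab : a < b) (hbc : b < c) {h : ℝ → ℝ}
    (hlip : ∃ K : NNReal, LipschitzOnWith K h (Set.Icc a c))
    (hconv₁ : ConvexOn ℝ (Set.Icc a b) h)
    (hconv₂ : ConvexOn ℝ (Set.Icc b c) h)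
    {dminus dplus : ℝ}
    (hdm : HasDerivWithinAt h dminus (Set.Icc a b) b)
    (hdp : HasDerivWithinAt h dplus (Set.Icc b c) b)
    (hle : dminus ≤ dplus) :
    ConvexOn ℝ (Set.Icc a c) h := by
  apply convexOn_of_slope_mono_adjacent (convex_Icc a c)
  intro x y z hx hz hxy hyz
  rcases le_or_gt z b with hzb | hbz
  · -- all in [a, b]
    exact hconv₁.slope_mono_adjacent ⟨hx.1, by linarith⟩ ⟨by linarith [hx.1], hzb⟩ hxy hyz
  rcases le_or_gt b x with hbx | hxb
  · -- all in [b, c]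
    exact hconv₂.slope_mono_adjacent ⟨hbx, by linarith [hz.2]⟩ ⟨by linarith, hz.2⟩ hxy hyz
  -- now x < b < z
  have hxmem : x ∈ Set.Icc a b := ⟨hx.1, hxb.le⟩
  have hzmem : z ∈ Set.Icc b c := ⟨hbz.le, hz.2⟩
  have hA : (h b - h x) / (b - x) ≤ dminus := glue_slope_le_left hab hconv₁ hdm hxmem hxb
  have hB : dplus ≤ (h z - h b) / (z - b) := glue_slope_ge_right hbc hconv₂ hdp hzmem hbz
  rcases lt_trichotomy y b with hyb | rfl | hby
  · -- x < y < b < z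
    have hymem : y ∈ Set.Icc a b := ⟨hx.1.trans hxy.le, hyb.le⟩
    have h1 : (h y - h x) / (y - x) ≤ (h b - h y) / (b - y) :=
      hconv₁.slope_mono_adjacent hxmem (Set.right_mem_Icc.2 hab.le) hxy hyb
    have hA' : (h b - h y) / (b - y) ≤ dminus := glue_slope_le_left hab hconv₁ hdm hymem hyb
    have hS1 : (h b - h y) / (b - y) ≤ (h z - h b) / (z - b) := hA'.trans (hle.trans hB)
    -- show (h b - h y)/(b - y) ≤ (h z - h y)/(z - y)
    have hyb' : (0:ℝ) < b - y := by linarith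
    have hbz' : (0:ℝ) < z - b := by linarith
    have hyz' : (0:ℝ) < z - y := by linarith
    have key : (h b - h y) / (b - y) * (z - y) ≤ h z - h y := by
      have e1 : h b - h y = (h b - h y) / (b - y) * (b - y) := by field_simp
      have e2 : (h b - h y) / (b - y) * (z - b) ≤ h z - h b := by
        calc (h b - h y) / (b - y) * (z - b) ≤ (h z - h b) / (z - b) * (z - b) :=
              mul_le_mul_of_nonneg_right hS1 hbz'.le
          _ = h z - h b := by field_simp
      nlinarith [e1, e2]
    calc (h y - h x) / (y - x) ≤ (h b - h y) / (b - y) := h1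
      _ ≤ (h z - h y) / (z - y) := by rw [le_div_iff₀ hyz']; exact key
  · -- y = b
    exact hA.trans (hle.trans hB)
  · -- x < b < y < z
    have hymem : y ∈ Set.Icc b c := ⟨hby.le, hz.2.trans' hyz.le⟩
    have h1 : (h y - h b) / (y - b) ≤ (h z - h y) / (z - y) :=
      hconv₂.slope_mono_adjacent (Set.left_mem_Icc.2 hbc.le) hzmem hby hyz
    have hB' : dplus ≤ (h y - h b) / (y - b) := glue_slope_ge_right hbc hconv₂ hdp hymem hby
    have hS1 : (h b - h x) / (b - x) ≤ (h y - h b) / (y - b) := hA.trans (hle.trans hB')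
    have hxb' : (0:ℝ) < b - x := by linarith
    have hby' : (0:ℝ) < y - b := by linarith
    have hxy' : (0:ℝ) < y - x := by linarith
    have key : h y - h x ≤ (h y - h b) / (y - b) * (y - x) := by
      have e1 : h y - h b = (h y - h b) / (y - b) * (y - b) := by field_simp
      have e2 : h b - h x ≤ (h y - h b) / (y - b) * (b - x) := by
        calc h b - h x = (h b - h x) / (b - x) * (b - x) := by field_simp
          _ ≤ (h y - h b) / (y - b) * (b - x) :=
              mul_le_mul_of_nonneg_right hS1 hxb'.le
      nlinarith [e1, e2]
    calc (h y - h x) / (y - x) ≤ (h y - h b) / (y - b) := by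
          rw [div_le_iff₀ hxy']; exact key
      _ ≤ (h z - h y) / (z - y) := h1
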